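/- Let T > 0, let (Ω, F, P) be a probability space carrying a standard Brownian motion W : [0,T] × Ω → ℝ with continuous sample paths, and for each N ∈ ℕ (N ≥ 1) define the Euler approximation Y^N_0 := 0 and Y^N_{k+1} := Y^N_k − (T/N)·(Y^N_k)³ + (W_{(k+1)T/N} − W_{kT/N}) for k = 0, 1, …, N−1. Then lim_{N → ∞} E[|Y^N_N|] = ∞. -/

import Mathlib

open MeasureTheory ProbabilityTheory Filter
open Real
open scoped NNReal ENNReal

set_option maxHeartbeats 2000000


/-- Arithmetic core of one Euler step on the blow-up event. -/
lemma step_bound_aux {h y z A : ℝ} (hA2 : 2 ≤ A) (hhA : 2 ≤ h * A)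
    (hy : A ≤ |y|) (hz : |z| ≤ 1) : y ^ 2 ≤ |y - h * y ^ 3 + z| := by
  have hr2 : 2 ≤ |y| := hA2.trans hy
  have hy0 : 0 < |y| := by linarith
  have hA0 : 0 < A := by linarith
  have hh : 0 < h := by nlinarith
  have hhy : 2 * |y| ≤ h * y ^ 2 := by
    have h1 : h * A ≤ h * |y| := by nlinarith
    have h2 : (h * |y|) * |y| = h * y ^ 2 := by
      rw [mul_assoc, ← sq_abs y]; ring
    nlinarith
  have h1 : 1 ≤ h * y ^ 2 := by nlinarith
  have habs : |y - h * y ^ 3| = |y| * (h * y ^ 2 - 1) := by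
    have he : y - h * y ^ 3 = y * (1 - h * y ^ 2) := by ring
    rw [he, abs_mul, abs_of_nonpos (by linarith : 1 - h * y ^ 2 ≤ 0)]
    ring
  have h2 : |y - h * y ^ 3| - |z| ≤ |y - h * y ^ 3 + z| := by
    have := abs_sub_abs_le_abs_sub (y - h * y ^ 3) (-z)
    simpa [sub_neg_eq_add] using this
  have key : |y| * (2 * |y| - 1) ≤ |y| * (h * y ^ 2 - 1) :=
    mul_le_mul_of_nonneg_left (by linarith) (abs_nonneg y)
  nlinarith [sq_abs y]

/-- Lower bound for a Gaussian measure of a set containing `[a, a+1]`. -/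
lemma gauss_lb_aux (v : ℝ≥0) (hv : v ≠ 0) {a : ℝ} (ha : 0 ≤ a) {s : Set ℝ}
    (hsub : Set.Icc a (a + 1) ⊆ s) :
    ENNReal.ofReal (gaussianPDFReal 0 v (a + 1)) ≤ gaussianReal 0 v s := by
  rw [gaussianReal_apply 0 hv]
  have hv0 : (0:ℝ) < v := by positivity
  calc ENNReal.ofReal (gaussianPDFReal 0 v (a + 1))
      = ∫⁻ _ in Set.Icc a (a + 1), ENNReal.ofReal (gaussianPDFReal 0 v (a + 1)) := by
        rw [setLIntegral_const, Real.volume_Icc]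
        norm_num
    _ ≤ ∫⁻ x in Set.Icc a (a + 1), gaussianPDF 0 v x := by
        apply setLIntegral_mono' measurableSet_Icc
        intro x hx
        apply ENNReal.ofReal_le_ofReal
        unfold gaussianPDFReal
        apply mul_le_mul_of_nonneg_left _ (by positivity)
        apply Real.exp_le_exp.2
        have hx2 : (x - 0) ^ 2 ≤ (a + 1 - 0) ^ 2 := by nlinarith [hx.1, hx.2]
        have h2v : (0:ℝ) < 2 * v := by positivity
        rw [neg_div, neg_div, neg_le_neg_iff]
        gcongr
    _ ≤ ∫⁻ x in s, gaussianPDF 0 v x := lintegral_mono_set hsub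

/-- Lower bound on the Gaussian pdf with variance `T/N`. -/
lemma pdf_lb_aux {T : ℝ} (hT : 0 < T) {N : ℕ} (hN : 1 ≤ N) (x : ℝ) :
    Real.exp (Real.log (Real.sqrt (2 * π * T))⁻¹) * Real.exp (-(x ^ 2) * N / (2 * T))
      ≤ gaussianPDFReal 0 ((T / N).toNNReal) x := by
  have hNR : (1:ℝ) ≤ (N:ℝ) := by exact_mod_cast hN
  have hN0 : (0:ℝ) < N := by linarith
  have hTN : 0 < T / N := div_pos hT hN0
  have hco : (((T / N).toNNReal : ℝ≥0) : ℝ) = T / N := Real.coe_toNNReal _ hTN.le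
  have hπ := Real.pi_pos
  unfold gaussianPDFReal
  rw [hco]
  have hs0 : (0:ℝ) < (Real.sqrt (2 * π * T))⁻¹ := by positivity
  rw [Real.exp_log hs0]
  have h1 : (Real.sqrt (2 * π * T))⁻¹ ≤ (Real.sqrt (2 * π * (T / N)))⁻¹ := by
    have hTT : T / N ≤ T := div_le_self hT.le hNR
    have : Real.sqrt (2 * π * (T / N)) ≤ Real.sqrt (2 * π * T) := by
      apply Real.sqrt_le_sqrt; nlinarith
    have hpos : (0:ℝ) < Real.sqrt (2 * π * (T / N)) := by positivity
    exact inv_anti₀ hpos this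
  have h2 : -(x ^ 2) * N / (2 * T) = -(x - 0) ^ 2 / (2 * (T / N)) := by
    rw [sub_zero]
    field_simp
  rw [← h2]
  exact mul_le_mul_of_nonneg_right h1 (Real.exp_pos _).le

lemma nat_pow4_le (n : ℕ) (hn : 16 ≤ n) : n ^ 4 ≤ 2 ^ n := by
  induction n, hn using Nat.le_induction with
  | base => norm_num
  | succ n hn ih =>
    have h1 : (n + 1) ^ 4 ≤ 2 * n ^ 4 := by
      have h3 : 16 * n ^ 3 ≤ n ^ 4 := by
        calc 16 * n ^ 3 ≤ n * n ^ 3 := Nat.mul_le_mul_right _ hn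
          _ = n ^ 4 := by ring
      have a1 : n ^ 2 ≤ n ^ 3 := Nat.pow_le_pow_right (by omega) (by omega)
      have a2 : n ≤ n ^ 3 := by calc n = n ^ 1 := (pow_one n).symm
                                  _ ≤ n ^ 3 := Nat.pow_le_pow_right (by omega) (by omega)
      have a3 : 1 ≤ n ^ 3 := Nat.one_le_pow _ _ (by omega)
      have he : (n + 1) ^ 4 = n ^ 4 + 4 * n ^ 3 + 6 * n ^ 2 + 4 * n + 1 := by ring
      omega
    calc (n + 1) ^ 4 ≤ 2 * n ^ 4 := h1
      _ ≤ 2 * 2 ^ n := by omega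
      _ = 2 ^ (n + 1) := by ring

lemma core2_aux (d : ℝ) :
    Tendsto (fun N : ℕ => (2:ℝ) ^ (N - 1) * Real.log 2 - d * (N:ℝ) ^ 3) atTop atTop := by
  rw [tendsto_atTop]
  intro b
  have hL : (0.6:ℝ) < Real.log 2 := by linarith [Real.log_two_gt_d9]
  have hR : ∀ᶠ N : ℕ in atTop, max 16 (2 * (|d| + |b| + 1) / Real.log 2) ≤ (N:ℝ) :=
    tendsto_natCast_atTop_atTop.eventually_ge_atTop _
  filter_upwards [hR, eventually_ge_atTop 1] with N hRN hN1
  have hx16 : (16:ℝ) ≤ (N:ℝ) := le_trans (le_max_left _ _) hRN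
  have hn16 : 16 ≤ N := by exact_mod_cast hx16
  have hpow : ((N:ℝ)) ^ 4 ≤ (2:ℝ) ^ N := by exact_mod_cast nat_pow4_le N hn16
  have h2 : (2:ℝ) ^ (N - 1) * 2 = (2:ℝ) ^ N := by
    rw [← pow_succ]; congr 1; omega
  have hxlog : 2 * (|d| + |b| + 1) ≤ (N:ℝ) * Real.log 2 := by
    have h := le_trans (le_max_right _ _) hRN
    rw [div_le_iff₀ (by linarith)] at h
    linarith
  have hN1R : (1:ℝ) ≤ (N:ℝ) := by exact_mod_cast hN1
  have hN3 : (1:ℝ) ≤ (N:ℝ) ^ 3 := one_le_pow₀ hN1R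
  have e1 : (N:ℝ) ^ 4 * Real.log 2 / 2 ≤ (2:ℝ) ^ (N - 1) * Real.log 2 := by
    have h3 : (N:ℝ) ^ 4 / 2 ≤ (2:ℝ) ^ (N - 1) := by nlinarith
    nlinarith
  have e3 : (N:ℝ) ^ 3 * (|d| + |b| + 1) ≤ (N:ℝ) ^ 3 * ((N:ℝ) * Real.log 2 / 2) :=
    mul_le_mul_of_nonneg_left (by linarith) (by positivity)
  have e4 : d * (N:ℝ) ^ 3 ≤ |d| * (N:ℝ) ^ 3 :=
    mul_le_mul_of_nonneg_right (le_abs_self d) (by positivity)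
  have e5 : |b| ≤ (N:ℝ) ^ 3 * |b| := le_mul_of_one_le_left (abs_nonneg b) hN3
  have e2 : (N:ℝ) ^ 4 * Real.log 2 / 2 = (N:ℝ) ^ 3 * ((N:ℝ) * Real.log 2 / 2) := by ring
  have hb : b ≤ |b| := le_abs_self b
  nlinarith [e1, e2, e3, e4, e5, hb, hN3]


/-- `W` is a standard Brownian motion on the time interval `[0, T]` with
continuous sample paths: each `W t` is measurable, `W 0 = 0`, the sample paths
are continuous on `[0, T]`, the increment `W t - W s` is centered Gaussian with
variance `t - s` for `0 ≤ s ≤ t ≤ T`, and increments over disjoint consecutive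
time intervals are independent. -/
def IsStandardBrownianMotion {Ω : Type*} [MeasurableSpace Ω] (P : Measure Ω)
    (T : ℝ) (W : ℝ → Ω → ℝ) : Prop :=
  (∀ t, t ∈ Set.Icc 0 T → Measurable (W t)) ∧
  (∀ ω, W 0 ω = 0) ∧
  (∀ ω, ContinuousOn (fun t => W t ω) (Set.Icc 0 T)) ∧
  (∀ s t : ℝ, 0 ≤ s → s ≤ t → t ≤ T →
    Measure.map (fun ω => W t ω - W s ω) P = gaussianReal 0 (Real.toNNReal (t - s))) ∧
  (∀ (n : ℕ) (t : Fin (n + 1) → ℝ), Monotone t → (∀ i, t i ∈ Set.Icc 0 T) →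
    iIndepFun
      (fun (i : Fin n) => fun ω => W (t i.succ) ω - W (t i.castSucc) ω) P)

theorem stmt_5 {Ω : Type*} [MeasureSpace Ω] [IsProbabilityMeasure (ℙ : Measure Ω)]
    (T : ℝ) (hT : 0 < T)
    (W : ℝ → Ω → ℝ) (hW : IsStandardBrownianMotion ℙ T W)
    (Y : ℕ → ℕ → Ω → ℝ)
    (hY0 : ∀ N, 1 ≤ N → ∀ ω, Y N 0 ω = 0)
    (hYrec : ∀ N, 1 ≤ N → ∀ k < N, ∀ ω,
      Y N (k + 1) ω = Y N k ω - (T / N) * (Y N k ω) ^ 3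
        + (W (((k : ℝ) + 1) * T / N) ω - W ((k : ℝ) * T / N) ω)) :
    Tendsto (fun N : ℕ => ∫⁻ ω, ENNReal.ofReal |Y N N ω| ∂ℙ) atTop (nhds ⊤) := by
  have hπ := Real.pi_pos
  set σ : ℝ := Real.log (Real.sqrt (2 * π * T))⁻¹ with hσ
  set D : ℝ := 2 * |σ| + (2 / T + 3) ^ 2 / (2 * T) + 1 / (2 * T) with hDdef
  set G : ℕ → ℝ := fun N => (2:ℝ) ^ (N - 1) * Real.log 2 - D * (N:ℝ) ^ 3 with hGdef
  have hmain : ∀ᶠ N : ℕ in atTop,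
      ENNReal.ofReal (Real.exp (G N)) ≤ ∫⁻ ω, ENNReal.ofReal |Y N N ω| ∂ℙ := by
    filter_upwards [eventually_ge_atTop 1] with N hN
    -- basic facts
    have hNR : (1:ℝ) ≤ (N:ℝ) := by exact_mod_cast hN
    have hN0 : (0:ℝ) < N := by linarith
    have hNne : (N:ℝ) ≠ 0 := ne_of_gt hN0
    have hTN : 0 < T / N := div_pos hT hN0
    set v : ℝ≥0 := (T / N).toNNReal with hv
    have hvne : v ≠ 0 := by
      rw [hv, Ne, Real.toNNReal_eq_zero]; push_neg; exact hTN
    set A : ℝ := 2 * (N:ℝ) / T + 2 with hA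
    have hA2 : 2 ≤ A := by
      rw [hA]
      have : 0 ≤ 2 * (N:ℝ) / T := by positivity
      linarith
    have hhA : 2 ≤ (T / N) * A := by
      have hc : (T / N) * A = 2 + 2 * (T / N) := by
        rw [hA]; field_simp
      rw [hc]; linarith
    -- time grid and increments
    set t : Fin (N + 1) → ℝ := fun i => ((i:ℕ):ℝ) * T / N with ht
    have htmem : ∀ i, t i ∈ Set.Icc 0 T := by
      intro i
      constructor
      · positivity
      · have h1 : ((i:ℕ):ℝ) ≤ (N:ℝ) := by exact_mod_cast Fin.is_le i
        calc ((i:ℕ):ℝ) * T / N ≤ (N:ℝ) * T / N := by gcongr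
          _ = T := by field_simp
    have htmono : Monotone t := by
      intro i j hij
      have h1 : ((i:ℕ):ℝ) ≤ ((j:ℕ):ℝ) := by exact_mod_cast hij
      simp only [ht]
      gcongr
    set f : Fin N → Ω → ℝ := fun i ω => W (t i.succ) ω - W (t i.castSucc) ω with hf
    have hWm : ∀ i : Fin (N + 1), Measurable (W (t i)) := fun i => hW.1 _ (htmem i)
    have hfm : ∀ i, Measurable (f i) := fun i => (hWm i.succ).sub (hWm i.castSucc)
    set S : Fin N → Set ℝ := fun i => if (i:ℕ) = 0 then Set.Ici A else Set.Icc (-1) 1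
      with hS
    have hSm : ∀ i, MeasurableSet (S i) := by
      intro i
      rw [hS]; dsimp only
      split
      · exact measurableSet_Ici
      · exact measurableSet_Icc
    set Ev : Set Ω := ⋂ i, f i ⁻¹' S i with hEv
    have i0lt : 0 < N := hN
    set i0 : Fin N := ⟨0, i0lt⟩ with hi0
    -- independence / product formula
    have hprodEq : ℙ Ev = ∏ i, ℙ (f i ⁻¹' S i) :=
      (hW.2.2.2.2 N t htmono htmem).meas_iInter (fun i => ⟨S i, hSm i, rfl⟩)
    -- distribution of each increment
    have hmap : ∀ i : Fin N, ℙ (f i ⁻¹' S i) = gaussianReal 0 v (S i) := by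
      intro i
      rw [← Measure.map_apply (hfm i) (hSm i)]
      have h0 : 0 ≤ t i.castSucc := (htmem _).1
      have h1 : t i.castSucc ≤ t i.succ := htmono (Fin.castSucc_le_succ i)
      have h2 : t i.succ ≤ T := (htmem _).2
      have hdiff : t i.succ - t i.castSucc = T / N := by
        simp only [ht, Fin.val_succ, Fin.coe_castSucc]
        push_cast
        field_simp
        ring
      rw [show f i = fun ω => W (t i.succ) ω - W (t i.castSucc) ω from rfl,
        hW.2.2.2.1 _ _ h0 h1 h2, hdiff]
    -- Gaussian lower bounds
    set p1 : ℝ := gaussianPDFReal 0 v (A + 1) with hp1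
    set p2 : ℝ := gaussianPDFReal 0 v 1 with hp2
    have hb1 : ENNReal.ofReal p1 ≤ ℙ (f i0 ⁻¹' S i0) := by
      rw [hmap i0]
      have hSi0 : S i0 = Set.Ici A := by simp [hS, hi0]
      rw [hSi0]
      exact gauss_lb_aux v hvne (by linarith : (0:ℝ) ≤ A) Set.Icc_subset_Ici_self
    have hb2 : ∀ i : Fin N, i ≠ i0 → ENNReal.ofReal p2 ≤ ℙ (f i ⁻¹' S i) := by
      intro i hi
      rw [hmap i]
      have hne : (i:ℕ) ≠ 0 := by
        intro hcon
        exact hi (Fin.ext (by simpa [hi0] using hcon))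
      have hSi : S i = Set.Icc (-1) 1 := by simp [hS, hne]
      rw [hSi]
      have h01 : Set.Icc (0:ℝ) (0 + 1) ⊆ Set.Icc (-1) 1 := by
        intro x hx
        exact ⟨by linarith [hx.1], by linarith [hx.2]⟩
      have := gauss_lb_aux v hvne le_rfl h01
      simpa using this
    have hprodLB : ENNReal.ofReal p1 * (ENNReal.ofReal p2) ^ (N - 1) ≤ ℙ Ev := by
      rw [hprodEq, ← Finset.mul_prod_erase Finset.univ _ (Finset.mem_univ i0)]
      apply mul_le_mul' hb1
      calc (ENNReal.ofReal p2) ^ (N - 1)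
          = ∏ _i ∈ Finset.univ.erase i0, ENNReal.ofReal p2 := by
            rw [Finset.prod_const, Finset.card_erase_of_mem (Finset.mem_univ _),
              Finset.card_univ, Fintype.card_fin]
        _ ≤ ∏ i ∈ Finset.univ.erase i0, ℙ (f i ⁻¹' S i) :=
            Finset.prod_le_prod' fun i hi => hb2 i (Finset.ne_of_mem_erase hi)
    -- measurability of Y N N
    have hYm : ∀ k, k ≤ N → Measurable (Y N k) := by
      intro k
      induction k with
      | zero =>
        intro _
        have h0 : Y N 0 = fun _ => (0:ℝ) := funext (hY0 N hN)
        rw [h0]; exact measurable_const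
      | succ k ih =>
        intro hk
        have hkN : k < N := hk
        have hY' : Y N (k + 1) = fun ω => Y N k ω - (T / N) * (Y N k ω) ^ 3
            + (W (((k:ℝ) + 1) * T / N) ω - W ((k:ℝ) * T / N) ω) :=
          funext (hYrec N hN k hkN)
        rw [hY']
        have hk1 : ((k:ℝ) + 1) ≤ (N:ℝ) := by exact_mod_cast hk
        have hkk : (k:ℝ) ≤ (N:ℝ) := by linarith
        have m1 : Measurable (W (((k:ℝ) + 1) * T / N)) := by
          apply hW.1
          constructor
          · positivity
          · calc ((k:ℝ) + 1) * T / N ≤ (N:ℝ) * T / N := by gcongr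
              _ = T := by field_simp
        have m2 : Measurable (W ((k:ℝ) * T / N)) := by
          apply hW.1
          constructor
          · positivity
          · calc (k:ℝ) * T / N ≤ (N:ℝ) * T / N := by gcongr
              _ = T := by field_simp
        exact (((ih hkN.le).sub (measurable_const.mul ((ih hkN.le).pow_const 3)))).add
          (m1.sub m2)
    -- pathwise lower bound on the event
    have hpath : ∀ ω ∈ Ev, (2:ℝ) ^ (2 ^ (N - 1)) ≤ |Y N N ω| := by
      intro ω hω
      have hωi : ∀ i : Fin N, f i ω ∈ S i := Set.mem_iInter.1 hω
      have claim : ∀ k, 1 ≤ k → k ≤ N →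
          A ≤ |Y N k ω| ∧ (2:ℝ) ^ (2 ^ (k - 1)) ≤ |Y N k ω| := by
        intro k hk1
        induction k, hk1 using Nat.le_induction with
        | base =>
          intro _
          have h1 := hYrec N hN 0 hN ω
          have hY00 := hY0 N hN ω
          have hf0 := hωi i0
          have hSi0 : S i0 = Set.Ici A := by simp [hS, hi0]
          rw [hSi0, Set.mem_Ici] at hf0
          have hfeq : f i0 ω = W (T / N) ω := by
            simp only [hf, ht]
            have e1 : ((i0.succ : ℕ):ℝ) = 1 := by simp [hi0]
            have e2 : ((i0.castSucc : ℕ):ℝ) = 0 := by simp [hi0]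
            rw [e1, e2, one_mul, zero_mul, zero_div, hW.2.1 ω, sub_zero]
          have hYeq : Y N 1 ω = W (T / N) ω := by
            rw [h1, hY00]
            norm_num [hW.2.1 ω]
          rw [hfeq] at hf0
          have habs : A ≤ |Y N 1 ω| := by
            rw [hYeq]
            exact hf0.trans (le_abs_self _)
          refine ⟨habs, ?_⟩
          have : (2:ℝ) ^ (2 ^ (1 - 1)) = 2 := by norm_num
          rw [this]
          linarith
        | succ k hk1 ih =>
          intro hkN
          have hkN' : k < N := hkN
          obtain ⟨ihA, ihP⟩ := ih hkN'.le
          set ik : Fin N := ⟨k, hkN'⟩ with hik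
          have hfk := hωi ik
          have hSik : S ik = Set.Icc (-1) 1 := by
            have : (ik : ℕ) = k := rfl
            simp only [hS, this]
            rw [if_neg (by omega)]
          rw [hSik] at hfk
          have hz : |f ik ω| ≤ 1 := abs_le.2 ⟨hfk.1, hfk.2⟩
          have hrec := hYrec N hN k hkN' ω
          have hfeq : f ik ω = W (((k:ℝ) + 1) * T / N) ω - W ((k:ℝ) * T / N) ω := by
            simp only [hf, ht, Fin.val_succ, Fin.coe_castSucc]
            norm_num
            rfl
          have hstep : (Y N k ω) ^ 2 ≤ |Y N (k + 1) ω| := by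
            rw [hrec, ← hfeq]
            exact step_bound_aux hA2 hhA ihA hz
          have hyA : A ^ 2 ≤ (Y N k ω) ^ 2 := by
            have := sq_abs (Y N k ω)
            nlinarith [abs_nonneg (Y N k ω)]
          constructor
          · have hAA : A ≤ A ^ 2 := by nlinarith [hA2, sq_nonneg (A - 1)]
            linarith
          · have h20 : (0:ℝ) ≤ (2:ℝ) ^ (2 ^ (k - 1)) := by positivity
            have hp : ((2:ℝ) ^ (2 ^ (k - 1))) ^ 2 ≤ (Y N k ω) ^ 2 := by
              have hsq := sq_abs (Y N k ω)
              have hmul := mul_le_mul ihP ihP h20 (abs_nonneg (Y N k ω))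
              nlinarith [hmul, hsq]
            have hexp : ((2:ℝ) ^ (2 ^ (k - 1))) ^ 2 = (2:ℝ) ^ (2 ^ ((k + 1) - 1)) := by
              rw [← pow_mul]
              congr 1
              have hkk : (k + 1) - 1 = (k - 1) + 1 := by omega
              rw [hkk, pow_succ]
            rw [← hexp]
            linarith
      exact (claim N hN le_rfl).2
    -- from pathwise bound to the integral
    have hEm : MeasurableSet Ev := MeasurableSet.iInter fun i => (hfm i) (hSm i)
    have hconst : ENNReal.ofReal ((2:ℝ) ^ (2 ^ (N - 1))) * ℙ Ev
        ≤ ∫⁻ ω, ENNReal.ofReal |Y N N ω| ∂ℙ := by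
      calc ENNReal.ofReal ((2:ℝ) ^ (2 ^ (N - 1))) * ℙ Ev
          = ∫⁻ _ in Ev, ENNReal.ofReal ((2:ℝ) ^ (2 ^ (N - 1))) ∂ℙ :=
            (setLIntegral_const _ _).symm
        _ ≤ ∫⁻ ω in Ev, ENNReal.ofReal |Y N N ω| ∂ℙ :=
            setLIntegral_mono' hEm fun ω hω => ENNReal.ofReal_le_ofReal (hpath ω hω)
        _ ≤ ∫⁻ ω, ENNReal.ofReal |Y N N ω| ∂ℙ := setLIntegral_le_lintegral _ _
    -- pdf lower bounds
    have hpdf1 : Real.exp σ * Real.exp (-(A + 1) ^ 2 * N / (2 * T)) ≤ p1 := by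
      rw [hp1, hv]
      exact pdf_lb_aux hT hN (A + 1)
    have hpdf2 : Real.exp σ * Real.exp (-(N:ℝ) / (2 * T)) ≤ p2 := by
      have h := pdf_lb_aux hT hN (1:ℝ)
      have h12 : -((1:ℝ) ^ 2) * N / (2 * T) = -(N:ℝ) / (2 * T) := by norm_num
      rw [h12] at h
      rw [hp2, hv]
      exact h
    -- real-number lower bound
    have hreal : Real.exp (G N) ≤ (2:ℝ) ^ (2 ^ (N - 1)) *
        (Real.exp σ * Real.exp (-(A + 1) ^ 2 * N / (2 * T)) *
          (Real.exp σ * Real.exp (-(N:ℝ) / (2 * T))) ^ (N - 1)) := by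
      have r1 : (2:ℝ) ^ (2 ^ (N - 1)) = Real.exp (((2 ^ (N - 1) : ℕ) : ℝ) * Real.log 2) := by
        rw [Real.exp_nat_mul, Real.exp_log two_pos]
      have r2 : (Real.exp σ * Real.exp (-(N:ℝ) / (2 * T))) ^ (N - 1)
          = Real.exp (((N - 1 : ℕ) : ℝ) * (σ + -(N:ℝ) / (2 * T))) := by
        rw [← Real.exp_add, Real.exp_nat_mul]
      rw [r1, r2, ← Real.exp_add, ← Real.exp_add, ← Real.exp_add]
      apply Real.exp_le_exp.2
      push_cast
      set m : ℝ := ((N - 1 : ℕ) : ℝ) with hm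
      have hm1 : m ≤ (N:ℝ) := by rw [hm]; exact_mod_cast Nat.sub_le N 1
      have hm0 : (0:ℝ) ≤ m := Nat.cast_nonneg _
      have hN3 : (N:ℝ) ≤ (N:ℝ) ^ 3 := by
        have h2 : (1:ℝ) ≤ (N:ℝ) ^ 2 := by nlinarith
        nlinarith [mul_le_mul_of_nonneg_left h2 hN0.le]
      have hA1 : A + 1 ≤ (2 / T + 3) * (N:ℝ) := by
        have he : A + 1 = 2 / T * (N:ℝ) + 3 := by rw [hA]; ring
        rw [he]
        nlinarith
      have h0 : (0:ℝ) ≤ A + 1 := by linarith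
      have h1 : (0:ℝ) ≤ (2 / T + 3) * (N:ℝ) := le_trans h0 hA1
      have hA1sq : (A + 1) ^ 2 ≤ (2 / T + 3) ^ 2 * (N:ℝ) ^ 2 := by
        have := mul_le_mul hA1 hA1 h0 h1
        nlinarith [this]
      have h2T : (0:ℝ) < 2 * T := by linarith
      have b1 : (A + 1) ^ 2 * (N:ℝ) / (2 * T) ≤ (2 / T + 3) ^ 2 * (N:ℝ) ^ 3 / (2 * T) := by
        rw [div_le_div_iff_of_pos_right h2T]
        nlinarith [mul_le_mul_of_nonneg_right hA1sq hN0.le]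
      have b2 : m * ((N:ℝ) / (2 * T)) ≤ (N:ℝ) ^ 3 / (2 * T) := by
        have he : m * ((N:ℝ) / (2 * T)) = m * (N:ℝ) / (2 * T) := by ring
        rw [he, div_le_div_iff_of_pos_right h2T]
        nlinarith [mul_le_mul_of_nonneg_right hm1 hN0.le]
      have b3 : -(2 * |σ| * (N:ℝ) ^ 3) ≤ (1 + m) * σ := by
        have c1 : -((1 + m) * |σ|) ≤ (1 + m) * σ := by
          nlinarith [neg_abs_le σ, abs_nonneg σ]
        have c2 : (1 + m) * |σ| ≤ 2 * (N:ℝ) * |σ| :=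
          mul_le_mul_of_nonneg_right (by linarith) (abs_nonneg σ)
        have c3 : 2 * (N:ℝ) * |σ| ≤ 2 * |σ| * (N:ℝ) ^ 3 := by
          nlinarith [abs_nonneg σ]
        linarith
      rw [hGdef]
      dsimp only
      rw [hDdef]
      have hgoal : -(2 * |σ| + (2 / T + 3) ^ 2 / (2 * T) + 1 / (2 * T)) * (N:ℝ) ^ 3
          ≤ (1 + m) * σ - (A + 1) ^ 2 * (N:ℝ) / (2 * T) - m * ((N:ℝ) / (2 * T)) := by
        have d1 : (2 / T + 3) ^ 2 / (2 * T) * (N:ℝ) ^ 3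
            = (2 / T + 3) ^ 2 * (N:ℝ) ^ 3 / (2 * T) := by ring
        have d2 : 1 / (2 * T) * (N:ℝ) ^ 3 = (N:ℝ) ^ 3 / (2 * T) := by ring
        nlinarith [b1, b2, b3, d1, d2]
      have hsum : (2:ℝ) ^ (N - 1) * Real.log 2
            + (σ + -(A + 1) ^ 2 * (N:ℝ) / (2 * T) + m * (σ + -(N:ℝ) / (2 * T)))
          = (2:ℝ) ^ (N - 1) * Real.log 2
            + ((1 + m) * σ - (A + 1) ^ 2 * (N:ℝ) / (2 * T) - m * ((N:ℝ) / (2 * T))) := by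
        ring
      linarith [hgoal, hsum]
    -- assemble
    have hfinal : ENNReal.ofReal (Real.exp (G N))
        ≤ ENNReal.ofReal ((2:ℝ) ^ (2 ^ (N - 1))) *
          (ENNReal.ofReal p1 * (ENNReal.ofReal p2) ^ (N - 1)) := by
      have hp10 : 0 ≤ p1 := by rw [hp1]; exact gaussianPDFReal_nonneg _ _ _
      have hp20 : 0 ≤ p2 := by rw [hp2]; exact gaussianPDFReal_nonneg _ _ _
      rw [← ENNReal.ofReal_pow hp20, ← ENNReal.ofReal_mul hp10,
        ← ENNReal.ofReal_mul (by positivity)]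
      apply ENNReal.ofReal_le_ofReal
      calc Real.exp (G N)
          ≤ (2:ℝ) ^ (2 ^ (N - 1)) *
            (Real.exp σ * Real.exp (-(A + 1) ^ 2 * N / (2 * T)) *
              (Real.exp σ * Real.exp (-(N:ℝ) / (2 * T))) ^ (N - 1)) := hreal
        _ ≤ (2:ℝ) ^ (2 ^ (N - 1)) * (p1 * p2 ^ (N - 1)) := by
            gcongr (2:ℝ) ^ (2 ^ (N - 1)) * (?_ * ?_ ^ (N - 1)) <;>
              first
              | exact hpdf1
              | exact hpdf2
    calc ENNReal.ofReal (Real.exp (G N))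
        ≤ ENNReal.ofReal ((2:ℝ) ^ (2 ^ (N - 1))) *
          (ENNReal.ofReal p1 * (ENNReal.ofReal p2) ^ (N - 1)) := hfinal
      _ ≤ ENNReal.ofReal ((2:ℝ) ^ (2 ^ (N - 1))) * ℙ Ev := mul_le_mul_right hprodLB _
      _ ≤ ∫⁻ ω, ENNReal.ofReal |Y N N ω| ∂ℙ := hconst
  have htend : Tendsto (fun N : ℕ => Real.exp (G N)) atTop atTop :=
    Real.tendsto_exp_atTop.comp (core2_aux D)
  rw [ENNReal.tendsto_nhds_top_iff_nat]
  intro n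
  filter_upwards [hmain, htend.eventually_ge_atTop ((n:ℝ) + 1)] with N h1 h2
  have h3 : (n : ℝ≥0∞) < ENNReal.ofReal (Real.exp (G N)) := by
    rw [← ENNReal.ofReal_natCast n]
    exact (ENNReal.ofReal_lt_ofReal_iff (by positivity)).2 (by linarith)
  exact lt_of_lt_of_le h3 h1
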